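/- Fix d ≥ 1, m ≥ 1, and two distinct sites k, i ∈ Z^d. The number of m-sided axis-parallel lattice cubes I ⊂ Z^d satisfying i ∈ I and k ∉ I is at most min{ d·m^{d−1}·ρ(k,i), m^d }, where ρ(k,i) = max_ν |k_ν − i_ν|. -/

import Mathlib

/-- Sites of the `d`-dimensional cubic lattice. -/
abbrev Site (d : ℕ) := Fin d → ℤ

/-- The sup-metric `ρ(k,i) = max_ν |k_ν − i_ν|` on `ℤ^d`. -/
def rho {d : ℕ} (k i : Site d) : ℕ :=
  Finset.univ.sup fun ν => (k ν - i ν).natAbs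

/-- The `m`-sided lattice cube with lower corner `a`. -/
noncomputable def cube {d : ℕ} (m : ℕ) (a : Site d) : Finset (Site d) :=
  Fintype.piFinset fun ν => Finset.Icc (a ν) (a ν + (m : ℤ) - 1)

lemma sdiff_Icc_card_le (c x y : ℤ) :
    ((Finset.Icc (x - c) x) \ (Finset.Icc (y - c) y)).card ≤ (y - x).natAbs := by
  rcases le_or_gt x y with h | h
  · have hsub : (Finset.Icc (x - c) x) \ (Finset.Icc (y - c) y) ⊆
        Finset.Ico (x - c) (y - c) := by
      intro z hz
      simp only [Finset.mem_sdiff, Finset.mem_Icc, Finset.mem_Ico, not_and, not_le] at hz ⊢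
      omega
    calc _ ≤ (Finset.Ico (x - c) (y - c)).card := Finset.card_le_card hsub
    _ ≤ (y - x).natAbs := by rw [Int.card_Ico]; omega
  · have hsub : (Finset.Icc (x - c) x) \ (Finset.Icc (y - c) y) ⊆
        Finset.Ioc y x := by
      intro z hz
      simp only [Finset.mem_sdiff, Finset.mem_Icc, Finset.mem_Ioc, not_and, not_le] at hz ⊢
      omega
    calc _ ≤ (Finset.Ioc y x).card := Finset.card_le_card hsub
    _ ≤ (y - x).natAbs := by rw [Int.card_Ioc]; omega

/-- the number of `m`-sided lattice cubes containing `i` but not `k` is at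
most `min { d·m^{d−1}·ρ(k,i), m^d }`.  (The corners `a` of the cubes containing `i` are
exactly the points of `Π_ν [i_ν − (m−1), i_ν]`.) -/
theorem card_cubes_sep_le {d m : ℕ} (hd : 1 ≤ d) (hm : 1 ≤ m)
    (k i : Site d) (hki : k ≠ i) :
    ((Fintype.piFinset fun ν => Finset.Icc (i ν - ((m : ℤ) - 1)) (i ν)).filter
        fun a => k ∉ cube m a).card ≤
      min (d * m ^ (d - 1) * rho k i) (m ^ d) := by
  have hIcard : ∀ ν : Fin d, (Finset.Icc (i ν - ((m : ℤ) - 1)) (i ν)).card = m := by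
    intro ν; rw [Int.card_Icc]; omega
  apply le_min
  · set B : Fin d → Finset (Site d) := fun ν =>
      Fintype.piFinset fun μ =>
        if μ = ν then (Finset.Icc (i μ - ((m : ℤ) - 1)) (i μ)) \
            (Finset.Icc (k μ - ((m : ℤ) - 1)) (k μ))
        else Finset.Icc (i μ - ((m : ℤ) - 1)) (i μ) with hB
    have hsub : ((Fintype.piFinset fun ν => Finset.Icc (i ν - ((m : ℤ) - 1)) (i ν)).filter
        fun a => k ∉ cube m a) ⊆ Finset.univ.biUnion B := by
      intro a ha
      simp only [Finset.mem_filter, Fintype.mem_piFinset] at ha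
      obtain ⟨h1, h2⟩ := ha
      rw [cube] at h2
      simp only [Fintype.mem_piFinset, not_forall] at h2
      obtain ⟨ν, hν⟩ := h2
      refine Finset.mem_biUnion.2 ⟨ν, Finset.mem_univ _, ?_⟩
      rw [hB]
      simp only [Fintype.mem_piFinset]
      intro μ
      by_cases hμ : μ = ν
      · subst hμ
        rw [if_pos rfl, Finset.mem_sdiff]
        refine ⟨h1 μ, ?_⟩
        simp only [Finset.mem_Icc] at hν ⊢
        omega
      · simpa [hμ] using h1 μ
    have hBcard : ∀ ν : Fin d, (B ν).card ≤ m ^ (d - 1) * rho k i := by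
      intro ν
      rw [hB, Fintype.card_piFinset]
      have hrw : (∏ μ : Fin d, (if μ = ν then (Finset.Icc (i μ - ((m : ℤ) - 1)) (i μ)) \
            (Finset.Icc (k μ - ((m : ℤ) - 1)) (k μ))
          else Finset.Icc (i μ - ((m : ℤ) - 1)) (i μ)).card) =
          ((Finset.Icc (i ν - ((m : ℤ) - 1)) (i ν)) \
            (Finset.Icc (k ν - ((m : ℤ) - 1)) (k ν))).card *
          ∏ μ ∈ Finset.univ.erase ν, (if μ = ν then (Finset.Icc (i μ - ((m : ℤ) - 1)) (i μ)) \
            (Finset.Icc (k μ - ((m : ℤ) - 1)) (k μ))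
          else Finset.Icc (i μ - ((m : ℤ) - 1)) (i μ)).card := by
        rw [← Finset.mul_prod_erase Finset.univ _ (Finset.mem_univ ν), if_pos rfl]
      rw [hrw]
      have h2 : (∏ μ ∈ Finset.univ.erase ν, (if μ = ν then
            (Finset.Icc (i μ - ((m : ℤ) - 1)) (i μ)) \
            (Finset.Icc (k μ - ((m : ℤ) - 1)) (k μ))
          else Finset.Icc (i μ - ((m : ℤ) - 1)) (i μ)).card) = m ^ (d - 1) := by
        rw [Finset.prod_congr rfl (fun μ hμ => ?_), Finset.prod_const,
          Finset.card_erase_of_mem (Finset.mem_univ ν), Finset.card_univ, Fintype.card_fin]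
        rw [if_neg (Finset.ne_of_mem_erase hμ), hIcard]
      rw [h2, mul_comm]
      apply Nat.mul_le_mul_left
      calc _ ≤ (k ν - i ν).natAbs := sdiff_Icc_card_le _ _ _
      _ ≤ rho k i := Finset.le_sup (f := fun ν => (k ν - i ν).natAbs) (Finset.mem_univ ν)
    calc _ ≤ (Finset.univ.biUnion B).card := Finset.card_le_card hsub
    _ ≤ ∑ ν, (B ν).card := Finset.card_biUnion_le
    _ ≤ ∑ _ν : Fin d, m ^ (d - 1) * rho k i := Finset.sum_le_sum fun ν _ => hBcard ν
    _ = d * m ^ (d - 1) * rho k i := by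
        rw [Finset.sum_const, Finset.card_univ, Fintype.card_fin, smul_eq_mul, mul_assoc]
  · calc _ ≤ (Fintype.piFinset fun ν => Finset.Icc (i ν - ((m : ℤ) - 1)) (i ν)).card :=
        Finset.card_filter_le _ _
    _ = m ^ d := by
        rw [Fintype.card_piFinset]
        simp [hIcard]
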